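/- arXiv:2502.03136 — 3 statements merged into one kernel-verified Lean document; each statement's English description precedes it below -/
import Mathlib

section
/- Every Lyndon word of length at least 2 over a linearly ordered alphabet admits a standard factorization u = vw where w is the longest proper suffix of u that is a Lyndon word, and then both v and w are Lyndon words with v < w in lexicographic order. -/
/-- A word over a linearly ordered alphabet is a Lyndon word if it is nonempty and strictly
lexicographically smaller than each of its proper nonempty suffixes. -/
def IsLyndon {α : Type*} [LinearOrder α] (w : List α) : Prop :=
  w ≠ [] ∧ ∀ u v : List α, w = u ++ v → u ≠ [] → v ≠ [] → List.Lex (· < ·) w v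

namespace LyndonAux

open List

variable {α : Type*} [LinearOrder α]

theorem lex_trans : ∀ {a b c : List α}, Lex (· < ·) a b → Lex (· < ·) b c → Lex (· < ·) a c
  | _, _, _, .nil, .cons _ => .nil
  | _, _, _, .nil, .rel _ => .nil
  | _, _, _, .cons h1, .cons h2 => .cons (lex_trans h1 h2)
  | _, _, _, .cons _, .rel h2 => .rel h2
  | _, _, _, .rel h1, .cons _ => .rel h1
  | _, _, _, .rel h1, .rel h2 => .rel (h1.trans h2)

theorem lex_irrefl : ∀ {a : List α}, Lex (· < ·) a a → False
  | _, .cons h => lex_irrefl h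
  | _, .rel h => lt_irrefl _ h

theorem lex_append_self : ∀ (v : List α) {w : List α}, w ≠ [] → Lex (· < ·) v (v ++ w)
  | [], [], hw => absurd rfl hw
  | [], _ :: _, _ => .nil
  | _ :: v, w, hw => .cons (lex_append_self v hw)

theorem lex_of_append_lex :
    ∀ (s : List α) {b c : List α}, Lex (· < ·) (s ++ b) (s ++ c) → Lex (· < ·) b c
  | [], _, _, h => h
  | _ :: s, _, _, .cons h => lex_of_append_lex s h
  | _ :: _, _, _, .rel h => absurd h (lt_irrefl _)

theorem lex_append_cases :
    ∀ (v : List α) {x : List α} (s : List α) {y : List α},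
      Lex (· < ·) (v ++ x) (s ++ y) → Lex (· < ·) v s ∨ v <+: s ∨ s <+: v
  | [], _, s, _, _ => Or.inr (Or.inl (nil_prefix))
  | _ :: _, _, [], _, _ => Or.inr (Or.inr (nil_prefix))
  | _ :: v, _, _ :: s, _, .rel h => Or.inl (.rel h)
  | a :: v, x, _ :: s, y, .cons h => by
      rcases lex_append_cases v s h with h1 | h1 | h1
      · exact Or.inl (.cons h1)
      · exact Or.inr (Or.inl ((List.cons_prefix_cons).2 ⟨rfl, h1⟩))
      · exact Or.inr (Or.inr ((List.cons_prefix_cons).2 ⟨rfl, h1⟩))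

theorem exists_lex_min :
    ∀ (L : List (List α)), L ≠ [] → ∃ m ∈ L, ∀ x ∈ L, ¬ Lex (· < ·) x m := by
  intro L
  induction L with
  | nil => intro h; exact absurd rfl h
  | cons a L ih =>
    intro _
    rcases eq_or_ne L [] with rfl | hL
    · exact ⟨a, mem_cons_self, by
        intro x hx
        rw [mem_singleton] at hx
        subst hx
        exact fun h => lex_irrefl h⟩
    · obtain ⟨m, hm, hmin⟩ := ih hL
      by_cases hc : Lex (· < ·) a m
      · refine ⟨a, mem_cons_self, ?_⟩
        intro x hx
        rcases mem_cons.1 hx with rfl | hx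
        · exact fun h => lex_irrefl h
        · exact fun h => hmin x hx (lex_trans h hc)
      · refine ⟨m, mem_cons_of_mem a hm, ?_⟩
        intro x hx
        rcases mem_cons.1 hx with rfl | hx
        · exact hc
        · exact hmin x hx

theorem lex_total : ∀ a b : List α, a = b ∨ Lex (· < ·) a b ∨ Lex (· < ·) b a
  | [], [] => Or.inl rfl
  | [], _ :: _ => Or.inr (Or.inl .nil)
  | _ :: _, [] => Or.inr (Or.inr .nil)
  | a :: l, b :: m => by
      rcases lt_trichotomy a b with h | rfl | h
      · exact Or.inr (Or.inl (.rel h))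
      · rcases lex_total l m with h1 | h1 | h1
        · exact Or.inl (by rw [h1])
        · exact Or.inr (Or.inl (.cons h1))
        · exact Or.inr (Or.inr (.cons h1))
      · exact Or.inr (Or.inr (.rel h))

end LyndonAux

open LyndonAux List in
/-- Every Lyndon word `u` of length at least `2` admits a standard
factorization `u = v ++ w` where `w` is the longest proper nonempty suffix of `u` that is
a Lyndon word; and then both `v` and `w` are Lyndon words with `v < w` lexicographically. -/
theorem lyndon_standard_factorization {α : Type*} [LinearOrder α]
    (u : List α) (hu : IsLyndon u) (hlen : 2 ≤ u.length) :
    ∃ v w : List α, u = v ++ w ∧ v ≠ [] ∧ w ≠ [] ∧ IsLyndon w ∧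
      (∀ v' w' : List α, u = v' ++ w' → v' ≠ [] → w' ≠ [] → IsLyndon w' →
        w'.length ≤ w.length) ∧
      IsLyndon v ∧ List.Lex (· < ·) v w := by
  classical
  set T : List (List α) := u.tails.filter (fun t => decide (t ≠ [] ∧ t ≠ u)) with hT
  have hmemT : ∀ t : List α, t ∈ T ↔ (t <:+ u ∧ t ≠ [] ∧ t ≠ u) := by
    intro t
    rw [hT, List.mem_filter, List.mem_tails]
    simp
  have hTne : T ≠ [] := by
    have htail : u.tail ∈ T := by
      rw [hmemT]
      have hlt : u.tail.length = u.length - 1 := by simp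
      refine ⟨tail_suffix u, ?_, ?_⟩
      · intro h
        have := congrArg List.length h
        simp at this
        omega
      · intro h
        have := congrArg List.length h
        rw [hlt] at this
        omega
    intro h
    rw [h] at htail
    exact List.not_mem_nil htail
  obtain ⟨w, hwT, hwmin⟩ := exists_lex_min T hTne
  rw [hmemT] at hwT
  obtain ⟨hwsuf, hwne, hwneu⟩ := hwT
  have hmin : ∀ t : List α, t <:+ u → t ≠ [] → t ≠ u → ¬ Lex (· < ·) t w := by
    intro t ht h1 h2
    exact hwmin t ((hmemT t).2 ⟨ht, h1, h2⟩)
  obtain ⟨v, hv⟩ := hwsuf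
  have hvne : v ≠ [] := by
    intro h
    rw [h, List.nil_append] at hv
    exact hwneu hv
  have hvpos : 1 ≤ v.length := by
    rcases v with _ | ⟨a, v⟩
    · exact absurd rfl hvne
    · simp
  have hwlen : w.length < u.length := by
    have := congrArg List.length hv
    rw [List.length_append] at this
    omega
  have htri : ∀ a b : List α, a ≠ b → ¬ Lex (· < ·) b a → Lex (· < ·) a b := by
    intro a b hne h
    rcases lex_total a b with h1 | h1 | h1
    · exact absurd h1 hne
    · exact h1
    · exact absurd h1 h
  -- w is Lyndon
  have hwL : IsLyndon w := by
    refine ⟨hwne, ?_⟩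
    intro a b hab ha hb
    have hbsufu : b <:+ u := List.IsSuffix.trans ⟨a, hab.symm⟩ ⟨v, hv⟩
    have hapos : 1 ≤ a.length := by
      rcases a with _ | ⟨x, a⟩
      · exact absurd rfl ha
      · simp
    have hblen : b.length < w.length := by
      have := congrArg List.length hab
      rw [List.length_append] at this
      omega
    have hbneu : b ≠ u := by
      intro h
      rw [h] at hblen
      omega
    have hwneb : w ≠ b := by
      intro h
      rw [h] at hblen
      omega
    exact htri w b hwneb (hmin b hbsufu hb hbneu)
  -- maximality
  have hmax : ∀ v' w' : List α, u = v' ++ w' → v' ≠ [] → w' ≠ [] → IsLyndon w' →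
      w'.length ≤ w.length := by
    intro v' w' he hv' hw' hL
    by_contra h
    push_neg at h
    have hsuf' : w' <:+ u := ⟨v', he.symm⟩
    have hws : w <:+ w' := List.suffix_of_suffix_length_le ⟨v, hv⟩ hsuf' (le_of_lt h)
    obtain ⟨p, hp⟩ := hws
    have hpne : p ≠ [] := by
      intro h0
      rw [h0, List.nil_append] at hp
      rw [hp] at h
      omega
    have hlex : Lex (· < ·) w' w := hL.2 p w hp.symm hpne hwne
    have hv'pos : 1 ≤ v'.length := by
      rcases v' with _ | ⟨x, v'⟩
      · exact absurd rfl hv'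
      · simp
    have hw'neu : w' ≠ u := by
      intro h0
      have := congrArg List.length he
      rw [List.length_append, h0] at this
      omega
    exact hmin w' hsuf' hw' hw'neu hlex
  -- v is Lyndon
  have hvL : IsLyndon v := by
    refine ⟨hvne, ?_⟩
    intro p s hps hp hs
    have hppos : 1 ≤ p.length := by
      rcases p with _ | ⟨x, p⟩
      · exact absurd rfl hp
      · simp
    have hslt : s.length < v.length := by
      have := congrArg List.length hps
      rw [List.length_append] at this
      omega
    have hu2 : u = p ++ (s ++ w) := by
      rw [← hv, hps, List.append_assoc]
    have hswne : s ++ w ≠ [] := by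
      intro h
      rcases List.append_eq_nil_iff.1 h with ⟨_, h2⟩
      exact hwne h2
    have h1 : Lex (· < ·) u (s ++ w) := hu.2 p (s ++ w) hu2 hp hswne
    have h1' : Lex (· < ·) (v ++ w) (s ++ w) := by rw [hv]; exact h1
    rcases lex_append_cases v s h1' with h2 | h2 | h2
    · exact h2
    · have := h2.length_le
      omega
    · obtain ⟨q, hq⟩ := h2
      have hqne : q ≠ [] := by
        intro h0
        rw [h0, List.append_nil] at hq
        rw [hq] at hslt
        omega
      have hspos : 1 ≤ s.length := by
        rcases s with _ | ⟨x, s⟩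
        · exact absurd rfl hs
        · simp
      have hu3 : u = s ++ (q ++ w) := by
        rw [← hv, ← hq, List.append_assoc]
      have h4 : Lex (· < ·) (s ++ (q ++ w)) (s ++ w) := by rw [← hu3]; exact h1
      have h5 : Lex (· < ·) (q ++ w) w := lex_of_append_lex s h4
      have hqwne : q ++ w ≠ [] := by
        intro h0
        rcases List.append_eq_nil_iff.1 h0 with ⟨_, h2'⟩
        exact hwne h2'
      have hqwneu : q ++ w ≠ u := by
        intro h0
        have := congrArg List.length hu3
        rw [h0, List.length_append] at this
        omega
      exact absurd h5 (hmin (q ++ w) ⟨s, hu3.symm⟩ hqwne hqwneu)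
  have h6 : Lex (· < ·) v u := by
    rw [← hv]
    exact lex_append_self v hwne
  have h7 : Lex (· < ·) u w := hu.2 v w hv.symm hvne hwne
  exact ⟨v, w, hv.symm, hvne, hwne, hwL, hmax, hvL, lex_trans h6 h7⟩
end

section
/- The number of Lyndon words of length k over an alphabet of n letters equals (1/k) Σ_{d | k} μ(k/d) n^d, where μ is the Möbius function. -/
namespace LyndonAux

variable {α : Type*}

/-- `pow u m` is the word `u` repeated `m` times. -/
def pow (u : List α) : ℕ → List α
  | 0 => []
  | m + 1 => u ++ pow u m

@[simp] theorem pow_zero (u : List α) : pow u 0 = [] := rfl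

theorem pow_succ (u : List α) (m : ℕ) : pow u (m + 1) = u ++ pow u m := rfl

@[simp] theorem length_pow (u : List α) (m : ℕ) : (pow u m).length = m * u.length := by
  induction m with
  | zero => simp
  | succ m ih => simp [pow_succ, ih, Nat.succ_mul, Nat.add_comm]

theorem pow_add (u : List α) (a b : ℕ) : pow u (a + b) = pow u a ++ pow u b := by
  induction a with
  | zero => simp
  | succ a ih => rw [Nat.add_right_comm, pow_succ, pow_succ, ih, List.append_assoc]

theorem pow_one (u : List α) : pow u 1 = u := by simp [pow_succ]

theorem pow_succ' (u : List α) (m : ℕ) : pow u (m + 1) = pow u m ++ u := by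
  rw [pow_add, pow_one]

theorem take_pow (u : List α) {s m : ℕ} (h : s ≤ m) :
    (pow u m).take (s * u.length) = pow u s := by
  obtain ⟨t, rfl⟩ := Nat.exists_eq_add_of_le h
  rw [pow_add, ← length_pow, List.take_left]

theorem rotate_pow_length (u : List α) (m : ℕ) : (pow u m).rotate u.length = pow u m := by
  cases m with
  | zero => simp
  | succ m =>
    rw [pow_succ, List.rotate_append_length_eq, ← pow_succ']
    exact (pow_succ u m).symm

theorem pow_append_comm (x y : List α) (m : ℕ) :
    pow (x ++ y) m ++ x = x ++ pow (y ++ x) m := by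
  induction m with
  | zero => simp
  | succ m ih => rw [pow_succ, pow_succ, List.append_assoc, List.append_assoc, ih,
      ← List.append_assoc y x, ← List.append_assoc]

theorem rotate_pow (u : List α) {j : ℕ} (hj : j ≤ u.length) (m : ℕ) :
    (pow u m).rotate j = pow (u.rotate j) m := by
  cases m with
  | zero => simp
  | succ m =>
    have hju : u = u.take j ++ u.drop j := (List.take_append_drop j u).symm
    have hlen : j ≤ (pow u (m+1)).length := by
      simp only [length_pow]
      exact hj.trans (Nat.le_mul_of_pos_left _ (Nat.succ_pos m))
    rw [List.rotate_eq_drop_append_take hlen,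
      List.rotate_eq_drop_append_take hj]
    have htake : (pow u (m+1)).take j = u.take j := by
      rw [pow_succ]
      exact List.take_append_of_le_length hj
    have hdrop : (pow u (m+1)).drop j = u.drop j ++ pow u m := by
      rw [pow_succ, List.drop_append_of_le_length hj]
    rw [htake, hdrop]
    calc u.drop j ++ pow u m ++ u.take j
        = u.drop j ++ (pow (u.take j ++ u.drop j) m ++ u.take j) := by
          rw [List.append_assoc, ← hju]
      _ = u.drop j ++ (u.take j ++ pow (u.drop j ++ u.take j) m) := by
          rw [pow_append_comm]
      _ = (u.drop j ++ u.take j) ++ pow (u.drop j ++ u.take j) m := by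
          rw [List.append_assoc]
      _ = pow (u.drop j ++ u.take j) (m + 1) := (pow_succ _ m).symm

theorem rotate_mul_eq_self (w : List α) {d : ℕ} (h : w.rotate d = w) (q : ℕ) :
    w.rotate (q * d) = w := by
  induction q with
  | zero => simp
  | succ q ih => rw [Nat.succ_mul, ← List.rotate_rotate, ih, h]

/-- Periodicity implies being a power of the prefix. -/
theorem eq_pow_of_rotate_eq_self : ∀ (m : ℕ) (w : List α) (d : ℕ), 0 < d →
    w.length = m * d → w.rotate d = w → w = pow (w.take d) m := by
  intro m
  induction m with
  | zero =>
    intro w d _ hlen _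
    simp only [Nat.zero_mul, List.length_eq_zero_iff] at hlen
    simp [hlen]
  | succ m ih =>
    intro w d hd hlen hrot
    have hdw : d ≤ w.length := by
      rw [hlen, Nat.succ_mul]; exact Nat.le_add_left _ _
    set a := w.take d with ha
    set b := w.drop d with hb
    have hw : w = a ++ b := (List.take_append_drop d w).symm
    have hcomm : a ++ b = b ++ a :=
      calc a ++ b = w := hw.symm
        _ = w.rotate d := hrot.symm
        _ = b ++ a := List.rotate_eq_drop_append_take hdw
    have hla : a.length = d := List.length_take_of_le hdw
    have hlb : b.length = m * d := by
      have := List.length_drop (i := d) (l := w)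
      rw [hlen] at this
      rw [hb, this, Nat.succ_mul]
      omega
    rcases Nat.eq_zero_or_pos m with hm | hm
    · subst hm
      simp only [Nat.zero_mul, List.length_eq_zero_iff] at hlb
      simp [hw, hlb, pow_one]
    · have hdb : d ≤ b.length := by rw [hlb]; exact Nat.le_mul_of_pos_left _ hm
      have htb : b.take d = a := by
        have : (b ++ a).take d = (a ++ b).take d := by rw [hcomm]
        rw [List.take_append_of_le_length hdb, List.take_left' hla] at this
        first | exact this | exact this.symm
      have hdbdrop : b = b.drop d ++ a := by
        have : (b ++ a).drop d = (a ++ b).drop d := by rw [hcomm]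
        rw [List.drop_append_of_le_length hdb, List.drop_left' hla] at this
        first | exact this | exact this.symm
      have hrb : b.rotate d = b := by
        rw [List.rotate_eq_drop_append_take hdb, htb, ← hdbdrop]
      have := ih b d hd hlb hrb
      rw [htb] at this
      rw [hw, pow_succ, ← this]

end LyndonAux
namespace LyndonAux

variable {α : Type*}

open scoped Classical

/-- A word is primitive if it is nonempty and none of its nontrivial rotations equals itself. -/
def Primitive (u : List α) : Prop :=
  u ≠ [] ∧ ∀ j, 0 < j → j < u.length → u.rotate j ≠ u

theorem exists_period (w : List α) (hw : w ≠ []) :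
    ∃ j, 0 < j ∧ w.rotate j = w :=
  ⟨w.length, List.length_pos_iff.mpr hw, w.rotate_length⟩

/-- The least period of a nonempty word. -/
noncomputable def lper (w : List α) (hw : w ≠ []) : ℕ :=
  Nat.find (exists_period w hw)

theorem lper_pos (w : List α) (hw : w ≠ []) : 0 < lper w hw :=
  (Nat.find_spec (exists_period w hw)).1

theorem rotate_lper (w : List α) (hw : w ≠ []) : w.rotate (lper w hw) = w :=
  (Nat.find_spec (exists_period w hw)).2

theorem lper_dvd (w : List α) (hw : w ≠ []) {j : ℕ} (hj : w.rotate j = w) :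
    lper w hw ∣ j := by
  have hd0 := lper_pos w hw
  have hr : w.rotate (j % lper w hw) = w := by
    have h1 : w.rotate (lper w hw * (j / lper w hw)) = w := by
      rw [Nat.mul_comm]
      exact rotate_mul_eq_self w (rotate_lper w hw) _
    have h2 := List.rotate_rotate w (lper w hw * (j / lper w hw)) (j % lper w hw)
    rw [h1, Nat.div_add_mod] at h2
    rw [h2, hj]
  by_contra hnd
  have hmodpos : 0 < j % lper w hw := by
    rcases Nat.eq_zero_or_pos (j % lper w hw) with h | h
    · exact absurd (Nat.dvd_of_mod_eq_zero h) hnd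
    · exact h
  have hge : lper w hw ≤ j % lper w hw := Nat.find_min' (exists_period w hw) ⟨hmodpos, hr⟩
  have hlt : j % lper w hw < lper w hw := Nat.mod_lt j hd0
  omega

theorem lper_dvd_length (w : List α) (hw : w ≠ []) : lper w hw ∣ w.length :=
  lper_dvd w hw w.rotate_length

theorem lper_le_length (w : List α) (hw : w ≠ []) : lper w hw ≤ w.length :=
  Nat.le_of_dvd (List.length_pos_iff.mpr hw) (lper_dvd_length w hw)

theorem eq_pow_lper (w : List α) (hw : w ≠ []) :
    w = pow (w.take (lper w hw)) (w.length / lper w hw) := by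
  obtain ⟨m, hm⟩ := lper_dvd_length w hw
  have hd := lper_pos w hw
  have : w.length / lper w hw = m := by rw [hm]; exact Nat.mul_div_cancel_left m hd
  rw [this]
  exact eq_pow_of_rotate_eq_self m w _ hd (by rw [hm, Nat.mul_comm]) (rotate_lper w hw)

theorem primitive_take_lper (w : List α) (hw : w ≠ []) :
    Primitive (w.take (lper w hw)) := by
  set d := lper w hw with hd
  have hdpos := lper_pos w hw
  have hdle := lper_le_length w hw
  have hlen : (w.take d).length = d := List.length_take_of_le hdle
  constructor
  · intro h
    rw [h] at hlen
    simp at hlen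
    omega
  · intro j hj0 hjlt heq
    rw [hlen] at hjlt
    have hjle : j ≤ (w.take d).length := by omega
    have hwpow := eq_pow_lper w hw
    have : w.rotate j = w := by
      conv_lhs => rw [hwpow]
      rw [rotate_pow _ hjle, heq, ← hwpow]
    have := lper_dvd w hw this
    have := Nat.le_of_dvd hj0 this
    omega

/-- Uniqueness of the primitive root. -/
theorem primitive_root_unique {w u : List α} (hw : w ≠ []) (hu : Primitive u) {m : ℕ}
    (hpow : w = pow u m) : u = w.take (lper w hw) ∧ m = w.length / lper w hw := by
  set d := lper w hw with hd
  have hdpos := lper_pos w hw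
  have hune : u ≠ [] := hu.1
  have hupos : 0 < u.length := List.length_pos_iff.mpr hune
  have hmpos : 0 < m := by
    rcases Nat.eq_zero_or_pos m with h | h
    · subst h; simp [pow_zero] at hpow; exact absurd hpow hw
    · exact h
  have hlenw : w.length = m * u.length := by rw [hpow, length_pow]
  -- w has period u.length
  have hrotu : w.rotate u.length = w := by rw [hpow]; exact rotate_pow_length u m
  have hddvd : d ∣ u.length := lper_dvd w hw hrotu
  obtain ⟨s, hs⟩ := hddvd
  have hspos : 0 < s := by
    rcases Nat.eq_zero_or_pos s with h | h
    · subst h; omega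
    · exact h
  have hule : u.length ≤ w.length := by
    rw [hlenw]; exact Nat.le_mul_of_pos_left _ hmpos
  have hutake : u = w.take u.length := by
    conv_rhs => rw [hpow]
    cases m with
    | zero => omega
    | succ m => rw [pow_succ, List.take_left]
  -- u = pow c s where c = w.take d
  set c := w.take d with hc
  have hclen : c.length = d := List.length_take_of_le (lper_le_length w hw)
  have hwc : w = pow c (w.length / d) := eq_pow_lper w hw
  have hsle : s ≤ w.length / d := by
    have h1 : s * d ≤ (w.length / d) * d := by
      rw [Nat.div_mul_cancel (lper_dvd_length w hw), Nat.mul_comm s d, ← hs]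
      exact hule
    exact Nat.le_of_mul_le_mul_right h1 hdpos
  have hupow : u = pow c s := by
    rw [hutake]
    conv_lhs => rw [hwc]
    rw [hs, Nat.mul_comm d s, ← hclen]
    exact take_pow c (by rw [hclen]; exact hsle)
  -- s must be 1
  have hs1 : s = 1 := by
    by_contra hs1
    have hs2 : 2 ≤ s := by omega
    have hdlt : d < u.length := by
      have h2 : d * 2 ≤ d * s := Nat.mul_le_mul (le_refl d) hs2
      omega
    have hrotdu : u.rotate d = u := by
      rw [hupow, ← hclen]
      exact rotate_pow_length c s
    exact hu.2 d hdpos hdlt hrotdu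
  constructor
  · rw [hupow, hs1, pow_one]
  · have hud : u.length = d := by rw [hs, hs1, Nat.mul_one]
    rw [hlenw, hud]
    rw [Nat.mul_div_assoc m (dvd_refl d), Nat.div_self hdpos, Nat.mul_one]

end LyndonAux
namespace LyndonAux

variable {α : Type*} [LinearOrder α]

theorem not_lex_append (y t : List α) : ¬ List.Lex (· < ·) (y ++ t) y := by
  induction y with
  | nil => exact fun h => nomatch h
  | cons c y ih =>
    intro h
    cases h with
    | rel h => exact lt_irrefl _ h
    | cons h => exact ih h

theorem not_lex_of_prefix {x y : List α} (h : y <+: x) : ¬ List.Lex (· < ·) x y := by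
  obtain ⟨t, rfl⟩ := h
  exact not_lex_append y t

theorem lex_asymm {x y : List α} (h : List.Lex (· < ·) x y) : ¬ List.Lex (· < ·) y x := by
  haveI : IsAsymm α (· < ·) := ⟨fun _ _ => lt_asymm⟩
  exact (List.Lex.asymm (· < ·)).asymm _ _ h

theorem lex_of_lex_append {x y z : List α} (h : List.Lex (· < ·) x (y ++ z))
    (hp : ¬ y <+: x) : List.Lex (· < ·) x y := by
  induction x generalizing y with
  | nil =>
    cases y with
    | nil => exact absurd (List.nil_prefix) hp
    | cons b y' => exact List.Lex.nil
  | cons a x' ih =>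
    cases y with
    | nil => exact absurd (List.nil_prefix) hp
    | cons b y' =>
      cases h with
      | rel h => exact List.Lex.rel h
      | cons h =>
        refine List.Lex.cons (ih h fun hc => hp ?_)
        rw [List.cons_prefix_cons]
        exact ⟨rfl, hc⟩

theorem lex_of_append_left_cancel {s x y : List α}
    (h : List.Lex (· < ·) (s ++ x) (s ++ y)) : List.Lex (· < ·) x y := by
  induction s with
  | nil => exact h
  | cons c s ih =>
    cases h with
    | rel h => exact absurd h (lt_irrefl _)
    | cons h => exact ih h

theorem lex_append_of_length_eq {t a x y : List α} (h : List.Lex (· < ·) t a)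
    (hl : t.length = a.length) : List.Lex (· < ·) (t ++ x) (a ++ y) := by
  induction t generalizing a with
  | nil =>
    cases h with
    | nil => simp at hl
  | cons c t' ih =>
    cases a with
    | nil => simp at hl
    | cons d a' =>
      cases h with
      | rel h => exact List.Lex.rel h
      | cons h =>
        simp only [List.length_cons, Nat.succ.injEq] at hl
        exact List.Lex.cons (ih h (by omega))

theorem lyndon_primitive {w : List α} (h : IsLyndon w) : Primitive w := by
  refine ⟨h.1, fun j hj0 hjlt hrot => ?_⟩
  have hjle : j ≤ w.length := hjlt.le
  have hsplit : w = w.take j ++ w.drop j := (List.take_append_drop j w).symm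
  have htne : w.take j ≠ [] := by
    intro hc
    have := congrArg List.length hc
    rw [List.length_take_of_le hjle] at this
    simp at this; omega
  have hdne : w.drop j ≠ [] := by
    intro hc
    have := congrArg List.length hc
    rw [List.length_drop] at this
    simp at this; omega
  have hlex := h.2 (w.take j) (w.drop j) hsplit htne hdne
  have hpre : w.drop j <+: w := by
    refine ⟨w.take j, ?_⟩
    rw [← List.rotate_eq_drop_append_take hjle, hrot]
  exact not_lex_of_prefix hpre hlex

theorem lyndon_lex_rotate {w : List α} (h : IsLyndon w) {j : ℕ} (hj0 : 0 < j)
    (hjlt : j < w.length) : List.Lex (· < ·) w (w.rotate j) := by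
  have hjle : j ≤ w.length := hjlt.le
  rw [List.rotate_eq_drop_append_take hjle]
  have hsplit : w = w.take j ++ w.drop j := (List.take_append_drop j w).symm
  have htne : w.take j ≠ [] := by
    intro hc
    have := congrArg List.length hc
    rw [List.length_take_of_le hjle] at this
    simp at this; omega
  have hdne : w.drop j ≠ [] := by
    intro hc
    have := congrArg List.length hc
    rw [List.length_drop] at this
    simp at this; omega
  exact List.Lex.append_right _ _ (h.2 (w.take j) (w.drop j) hsplit htne hdne)

/-- Two Lyndon words in the same rotation class coincide. -/
theorem lyndon_rotate_eq {w : List α} (h : IsLyndon w) {j : ℕ}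
    (h' : IsLyndon (w.rotate j)) : w.rotate j = w := by
  have hw : w ≠ [] := h.1
  have hlp : 0 < w.length := List.length_pos_iff.mpr hw
  rw [← List.rotate_mod]
  set j' := j % w.length with hj'
  have hj'lt : j' < w.length := Nat.mod_lt j hlp
  rcases Nat.eq_zero_or_pos j' with h0 | hpos
  · rw [h0, List.rotate_zero]
  · exfalso
    have h1 : List.Lex (· < ·) w (w.rotate j') := lyndon_lex_rotate h hpos hj'lt
    have hback : (w.rotate j').rotate (w.length - j') = w := by
      rw [List.rotate_rotate, Nat.add_sub_cancel' hj'lt.le, List.rotate_length]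
    have h'' : IsLyndon (w.rotate j') := by
      rwa [List.rotate_mod]
    have h2 : List.Lex (· < ·) (w.rotate j') w := by
      have := lyndon_lex_rotate h'' (j := w.length - j') (by omega)
        (by rw [List.length_rotate]; omega)
      rwa [hback] at this
    exact lex_asymm h1 h2

end LyndonAux
namespace LyndonAux

variable {α : Type*} [LinearOrder α]

theorem lex_of_list_lt {x y : List α} (h : x < y) : List.Lex (· < ·) x y := h

theorem list_lt_of_lex {x y : List α} (h : List.Lex (· < ·) x y) : x < y := h

theorem primitive_rotate {u : List α} (hu : Primitive u) (i : ℕ) :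
    Primitive (u.rotate i) := by
  have ht : u ≠ [] := hu.1
  refine ⟨by simpa using ht, fun j hj0 hjlt hrot => ?_⟩
  rw [List.length_rotate] at hjlt
  have htpos : 0 < u.length := List.length_pos_iff.mpr ht
  set t := u.length with htdef
  set m := t * (i / t + 1) - i with hm
  have him : i + m = t * (i / t + 1) := by
    have h1 := Nat.div_add_mod i t
    have h2 : i % t < t := Nat.mod_lt i htpos
    have h3 : t * (i / t + 1) = t * (i / t) + t := Nat.mul_succ t (i / t)
    omega
  have h1 : u.rotate (i + m) = u := by rw [him]; exact List.rotate_length_mul u _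
  have h2 : u.rotate j = u := by
    have h3 : u.rotate (i + j) = u.rotate i := by rw [← List.rotate_rotate]; exact hrot
    have h4 := congrArg (fun l => l.rotate m) h3
    simp only [List.rotate_rotate] at h4
    -- h4 : u.rotate (i + j + m) = u.rotate (i + m)
    rw [h1] at h4
    have h5 : i + j + m = (i + m) + j := by omega
    rw [h5, ← List.rotate_rotate, h1] at h4
    exact h4
  exact hu.2 j hj0 hjlt h2

theorem exists_lyndon_rotation {u : List α} (hu : Primitive u) :
    ∃ j, j < u.length ∧ IsLyndon (u.rotate j) := by
  have hne := hu.1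
  have htpos : 0 < u.length := List.length_pos_iff.mpr hne
  obtain ⟨j0, hj0mem, hmin⟩ := Finset.exists_min_image (Finset.range u.length)
    (fun j => u.rotate j) ⟨0, Finset.mem_range.mpr htpos⟩
  refine ⟨j0, Finset.mem_range.mp hj0mem, ?_⟩
  set ℓ := u.rotate j0 with hℓ
  have hℓprim : Primitive ℓ := primitive_rotate hu j0
  have hℓne : ℓ ≠ [] := hℓprim.1
  have hlenℓ : ℓ.length = u.length := List.length_rotate u j0
  have hminℓ : ∀ i, ℓ.rotate i = ℓ ∨ List.Lex (· < ·) ℓ (ℓ.rotate i) := by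
    intro i
    have heq : ℓ.rotate i = u.rotate ((j0 + i) % u.length) := by
      rw [hℓ, List.rotate_rotate, List.rotate_mod]
    have hmem : (j0 + i) % u.length ∈ Finset.range u.length :=
      Finset.mem_range.mpr (Nat.mod_lt _ htpos)
    have hle := hmin _ hmem
    rw [← heq] at hle
    rcases lt_or_eq_of_le hle with hlt | heq'
    · right; exact lex_of_list_lt hlt
    · left; exact heq'.symm
  refine ⟨hℓne, fun a b hab ha hb => ?_⟩
  have halen : 0 < a.length := List.length_pos_iff.mpr ha
  have hblen : 0 < b.length := List.length_pos_iff.mpr hb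
  have habl : a.length + b.length = ℓ.length := by rw [hab, List.length_append]
  have hba_rot : ℓ.rotate a.length = b ++ a := by
    rw [hab]; exact List.rotate_append_length_eq a b
  have hne_rot : ℓ.rotate a.length ≠ ℓ := hℓprim.2 a.length halen (by omega)
  have hlex : List.Lex (· < ·) ℓ (b ++ a) := by
    rcases hminℓ a.length with h | h
    · exact absurd h hne_rot
    · rwa [hba_rot] at h
  by_cases hpre : b <+: ℓ
  · exfalso
    obtain ⟨t, ht⟩ := hpre
    have h1 : List.Lex (· < ·) t a := by
      apply lex_of_append_left_cancel (s := b)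
      rw [ht]; exact hlex
    have htlen : t.length = a.length := by
      have := congrArg List.length ht
      rw [List.length_append] at this
      omega
    have h2 : List.Lex (· < ·) (t ++ b) (a ++ b) := lex_append_of_length_eq h1 htlen
    have h3 : ℓ.rotate b.length = t ++ b := by
      rw [← ht]; exact List.rotate_append_length_eq b t
    rcases hminℓ b.length with h4 | h4
    · exact hℓprim.2 b.length hblen (by omega) h4
    · rw [h3] at h4
      have h5 : ℓ < t ++ b := list_lt_of_lex h4
      have h6 : (t ++ b : List α) < ℓ := by
        rw [hab]; exact list_lt_of_lex h2
      exact lt_irrefl ℓ (lt_trans h5 h6)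
  · exact lex_of_lex_append hlex hpre

end LyndonAux
namespace LyndonAux

variable {α : Type*} [LinearOrder α]

theorem rotate_inj_of_primitive {u : List α} (hu : Primitive u) :
    ∀ {i j : ℕ}, i < u.length → j < u.length → u.rotate i = u.rotate j → i = j := by
  have aux : ∀ i j : ℕ, i ≤ j → i < u.length → j < u.length →
      u.rotate i = u.rotate j → i = j := by
    intro i j hij hi hj h
    by_contra hne
    have hlt : i < j := lt_of_le_of_ne hij hne
    have h1 := congrArg (fun l => l.rotate (u.length - j)) h
    simp only [List.rotate_rotate] at h1
    have h2 : j + (u.length - j) = u.length := by omega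
    rw [h2, List.rotate_length] at h1
    -- h1 : u.rotate (i + (u.length - j)) = u
    have h3 : 0 < i + (u.length - j) := by omega
    have h4 : i + (u.length - j) < u.length := by omega
    exact hu.2 _ h3 h4 h1
  intro i j hi hj h
  rcases le_total i j with hij | hij
  · exact aux i j hij hi hj h
  · exact (aux j i hij hj hi h.symm).symm

/-- The sigma type indexing: divisor `d`, a Lyndon word of length `d`, and a rotation amount. -/
abbrev SigT (α : Type*) [LinearOrder α] (k : ℕ) : Type _ :=
  Σ d : {d // d ∈ k.divisors}, {w : List α // w.length = d.1 ∧ IsLyndon w} × Fin d.1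

/-- The decoding map. -/
def G (k : ℕ) : SigT α k → {w : List α // w.length = k} := fun x =>
  ⟨pow ((x.2.1.1 : List α).rotate x.2.2) (k / x.1.1), by
    obtain ⟨⟨d, hd⟩, ⟨⟨ℓ, hℓd, hℓL⟩, i⟩⟩ := x
    have hdvd : d ∣ k := (Nat.mem_divisors.mp hd).1
    simp only [length_pow, List.length_rotate, hℓd]
    exact Nat.div_mul_cancel hdvd⟩

theorem G_bijective (k : ℕ) (hk : 0 < k) : Function.Bijective (G (α := α) k) := by
  constructor
  · rintro ⟨⟨d, hd⟩, ⟨⟨ℓ, hℓd, hℓL⟩, i⟩⟩ ⟨⟨d', hd'⟩, ⟨⟨ℓ', hℓd', hℓL'⟩, i'⟩⟩ heq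
    simp only [G, Subtype.mk.injEq] at heq
    have hld : ℓ.length = d := hℓd
    have hld' : ℓ'.length = d' := hℓd'
    have hilt : i.1 < d := i.2
    have hilt' : i'.1 < d' := i'.2
    have hdvd : d ∣ k := (Nat.mem_divisors.mp hd).1
    have hdvd' : d' ∣ k := (Nat.mem_divisors.mp hd').1
    have hkne : k ≠ 0 := hk.ne'
    have hdpos : 0 < d := Nat.pos_of_mem_divisors hd
    have hdpos' : 0 < d' := Nat.pos_of_mem_divisors hd'
    set u := ℓ.rotate i.1 with hu
    set u' := ℓ'.rotate i'.1 with hu'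
    have hulen : u.length = d := by rw [hu, List.length_rotate, hld]
    have hulen' : u'.length = d' := by rw [hu', List.length_rotate, hld']
    have huprim : Primitive u := primitive_rotate (lyndon_primitive hℓL) i.1
    have huprim' : Primitive u' := primitive_rotate (lyndon_primitive hℓL') i'.1
    set w := pow u (k / d) with hw
    have hwlen : w.length = k := by
      rw [hw, length_pow, hulen]; exact Nat.div_mul_cancel hdvd
    have hwne : w ≠ [] := by
      intro h; rw [h] at hwlen; simp at hwlen; omega
    have h1 := primitive_root_unique hwne huprim hw
    have h2 := primitive_root_unique hwne huprim' (by rw [heq])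
    have huu : u = u' := h1.1.trans h2.1.symm
    have hdd : d = d' := by
      rw [← hulen, ← hulen', huu]
    -- now substitute d' = d
    obtain rfl := hdd
    -- ℓ' is a rotation of ℓ
    have hrot : ℓ'.rotate i'.1 = ℓ.rotate i.1 := by rw [← hu, ← hu', huu]
    have hback : ℓ' = ℓ.rotate (i.1 + (d - i'.1)) := by
      have h3 := congrArg (fun l => l.rotate (d - i'.1)) hrot
      simp only [List.rotate_rotate] at h3
      have h4 : i'.1 + (d - i'.1) = d := by omega
      rw [h4] at h3
      have h5 : ℓ'.rotate d = ℓ' := by rw [← hld']; exact List.rotate_length ℓ'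
      rw [h5] at h3
      exact h3
    have hℓℓ : ℓ = ℓ' := by
      rw [hback]
      exact (lyndon_rotate_eq hℓL (by rw [← hback]; exact hℓL')).symm
    obtain rfl := hℓℓ
    have hii : i = i' := by
      apply Fin.ext
      apply rotate_inj_of_primitive (lyndon_primitive hℓL)
      · rw [hld]; exact hilt
      · rw [hld]; exact hilt' 
      · rw [← hu, ← hu', huu]
    obtain rfl := hii
    rfl
  · rintro ⟨w, hwlen⟩
    have hw : w ≠ [] := by
      intro h; rw [h] at hwlen; simp at hwlen; omega
    set d0 := lper w hw with hd0
    have hd0pos : 0 < d0 := lper_pos w hw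
    have hd0dvd : d0 ∣ k := by rw [← hwlen]; exact lper_dvd_length w hw
    have hd0le : d0 ≤ w.length := lper_le_length w hw
    set c := w.take d0 with hc
    have hcprim : Primitive c := primitive_take_lper w hw
    have hclen : c.length = d0 := List.length_take_of_le hd0le
    obtain ⟨j, hjlt, hLy⟩ := exists_lyndon_rotation hcprim
    rw [hclen] at hjlt
    set ℓ := c.rotate j with hℓ
    have hℓlen : ℓ.length = d0 := by rw [hℓ, List.length_rotate, hclen]
    set i := (d0 - j) % d0 with hi
    have hilt : i < d0 := Nat.mod_lt _ hd0pos
    have hback : ℓ.rotate i = c := by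
      rw [hℓ, List.rotate_rotate]
      rcases Nat.eq_zero_or_pos j with h0 | hpos
      · subst h0
        simp [hi]
      · have : j + i = d0 := by
          rw [hi, Nat.mod_eq_of_lt (by omega)]; omega
        rw [this, ← hclen, List.rotate_length]
    refine ⟨⟨⟨d0, Nat.mem_divisors.mpr ⟨hd0dvd, hk.ne'⟩⟩, ⟨⟨ℓ, hℓlen, hLy⟩, ⟨i, hilt⟩⟩⟩, ?_⟩
    apply Subtype.ext
    show pow (ℓ.rotate i) (k / d0) = w
    rw [hback, hc]
    have := eq_pow_lper w hw
    rw [← hd0, hwlen] at this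
    exact this.symm

end LyndonAux
namespace LyndonAux

theorem counting (n k : ℕ) (hk : 0 < k) :
    n ^ k = ∑ d ∈ k.divisors, d * ({w : List (Fin n) | w.length = d ∧ IsLyndon w}.ncard) := by
  classical
  have hfin : ∀ d : ℕ, {w : List (Fin n) | w.length = d ∧ IsLyndon w}.Finite := fun d =>
    (List.finite_length_eq (Fin n) d).subset (fun w hw => hw.1)
  letI : ∀ d : ℕ, Fintype {w : List (Fin n) // w.length = d ∧ IsLyndon w} := fun d =>
    (hfin d).fintype
  have h2 := Nat.card_congr (Equiv.ofBijective _ (G_bijective (α := Fin n) k hk))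
  -- h2 : Nat.card (SigT (Fin n) k) = Nat.card {w : List (Fin n) // w.length = k}
  have h1 : Nat.card {w : List (Fin n) // w.length = k} = n ^ k := by
    have h : Nat.card (List.Vector (Fin n) k) = n ^ k := by
      rw [Nat.card_eq_fintype_card, card_vector, Fintype.card_fin]
    exact h
  have h3 : Nat.card (SigT (Fin n) k) =
      ∑ d ∈ k.divisors, d * ({w : List (Fin n) | w.length = d ∧ IsLyndon w}.ncard) := by
    rw [Nat.card_eq_fintype_card]
    rw [Fintype.card_sigma]
    have hterm : ∀ d : {d // d ∈ k.divisors},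
        Fintype.card ({w : List (Fin n) // w.length = d.1 ∧ IsLyndon w} × Fin d.1)
          = d.1 * ({w : List (Fin n) | w.length = d.1 ∧ IsLyndon w}.ncard) := by
      intro d
      rw [Fintype.card_prod, Fintype.card_fin]
      rw [Nat.mul_comm]
      congr 1
      rw [← Nat.card_eq_fintype_card]
      exact Nat.card_coe_set_eq _
    rw [Finset.sum_congr rfl (fun d _ => hterm d)]
    exact Finset.sum_coe_sort k.divisors
      (fun d => d * ({w : List (Fin n) | w.length = d ∧ IsLyndon w}.ncard))
  rw [← h1, ← h2, h3]

end LyndonAux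

/-- The number of Lyndon words of length `k ≥ 1` over an alphabet of `n`
letters equals `(1/k) ∑_{d ∣ k} μ(k/d) n^d`, where `μ` is the Möbius function. -/
theorem card_lyndon_words (n k : ℕ) (hk : 0 < k) :
    (k : ℤ) * ({w : List (Fin n) | w.length = k ∧ IsLyndon w}.ncard : ℤ)
      = ∑ d ∈ k.divisors, (ArithmeticFunction.moebius (k / d)) * (n : ℤ) ^ d := by
  classical
  have key : ∀ m, 0 < m → Finset.sum m.divisors
      (fun d : ℕ => (d : ℤ) * ({w : List (Fin n) | w.length = d ∧ IsLyndon w}.ncard : ℤ))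
      = (n : ℤ) ^ m := by
    intro m hm
    have h := LyndonAux.counting n m hm
    have h2 := congrArg (Nat.cast : ℕ → ℤ) h
    push_cast at h2
    exact h2.symm
  have h := (ArithmeticFunction.sum_eq_iff_sum_smul_moebius_eq (R := ℤ)
      (f := fun d : ℕ => (d : ℤ) * ({w : List (Fin n) | w.length = d ∧ IsLyndon w}.ncard : ℤ))
      (g := fun m : ℕ => (n : ℤ) ^ m)).mp key k hk
  have h' : (k : ℤ) * ({w : List (Fin n) | w.length = k ∧ IsLyndon w}.ncard : ℤ)
      = ∑ x ∈ k.divisorsAntidiagonal,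
          (ArithmeticFunction.moebius x.1 : ℤ) • ((n : ℤ) ^ x.2) := h.symm
  rw [h', Nat.sum_divisorsAntidiagonal'
    (f := fun a b => (ArithmeticFunction.moebius a : ℤ) • ((n : ℤ) ^ b))]
  simp [smul_eq_mul]
end

section
/- Let x be an element of a complete filtered associative ℚ-algebra with x in filtration degree ≥ 1 and all 'coefficients' integral, and let (k_i) be a sequence of integers converging to t in ℤ_p. Then (1+x)^{k_i} converges coefficientwise to (1+x)^t, where (1+x)^t is defined by the binomial series; in particular each coefficient of (1+x)^t is a p-adic limit of integers. -/
def NCSeries (E : Type*) [CommRing E] (n : ℕ) : Type _ := List (Fin n) → E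

namespace NCSeries

variable {E : Type*} [CommRing E] {n : ℕ}

instance : AddCommGroup (NCSeries E n) := inferInstanceAs (AddCommGroup (List (Fin n) → E))

instance : Mul (NCSeries E n) :=
  ⟨fun f g w => ∑ i ∈ Finset.range (w.length + 1), f (w.take i) * g (w.drop i)⟩

instance : One (NCSeries E n) := ⟨fun w => if w = [] then 1 else 0⟩

theorem mul_apply (f g : NCSeries E n) (w : List (Fin n)) :
    (f * g) w = ∑ i ∈ Finset.range (w.length + 1), f (w.take i) * g (w.drop i) := rfl

theorem one_apply (w : List (Fin n)) : (1 : NCSeries E n) w = if w = [] then 1 else 0 := rfl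

theorem add_apply (f g : NCSeries E n) (w : List (Fin n)) : (f + g) w = f w + g w := rfl

private theorem mul_assoc' (f g h : NCSeries E n) : f * g * h = f * (g * h) := by
  funext w
  rw [mul_apply, mul_apply]
  have L : ∀ j ∈ Finset.range (w.length + 1),
      (f * g) (w.take j) * h (w.drop j)
        = ∑ i ∈ Finset.range (j + 1),
            f (w.take i) * g ((w.drop i).take (j - i)) * h (w.drop j) := by
    intro j hj
    rw [Finset.mem_range] at hj
    rw [mul_apply, Finset.sum_mul]
    have hlen : (w.take j).length = j := by
      rw [List.length_take]; omega
    rw [hlen]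
    refine Finset.sum_congr rfl fun i hi => ?_
    rw [Finset.mem_range] at hi
    have e1 : (w.take j).take i = w.take i := by
      rw [List.take_take, Nat.min_eq_left (by omega)]
    have e2 : (w.take j).drop i = (w.drop i).take (j - i) := by
      rw [List.drop_take]
    rw [e1, e2]
  have R : ∀ i ∈ Finset.range (w.length + 1),
      f (w.take i) * (g * h) (w.drop i)
        = ∑ j ∈ Finset.Icc i w.length,
            f (w.take i) * g ((w.drop i).take (j - i)) * h (w.drop j) := by
    intro i hi
    rw [Finset.mem_range] at hi
    rw [mul_apply, Finset.mul_sum]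
    have hlen : (w.drop i).length = w.length - i := by rw [List.length_drop]
    rw [hlen]
    rw [show Finset.range (w.length - i + 1) = Finset.image (fun j => j - i) (Finset.Icc i w.length) from ?_]
    · rw [Finset.sum_image ?_]
      · refine Finset.sum_congr rfl fun j hj => ?_
        rw [Finset.mem_Icc] at hj
        have e3 : (w.drop i).drop (j - i) = w.drop j := by
          rw [List.drop_drop]
          congr 1
          omega
        rw [e3, mul_assoc]
      · intro a ha b hb hab
        rw [Finset.mem_coe, Finset.mem_Icc] at ha hb
        simp only at hab
        omega
    · ext j
      simp only [Finset.mem_range, Finset.mem_image, Finset.mem_Icc]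
      constructor
      · intro hj; exact ⟨j + i, by omega, by omega⟩
      · rintro ⟨a, ⟨h1, h2⟩, rfl⟩; omega
  rw [Finset.sum_congr rfl L, Finset.sum_congr rfl R]
  exact Finset.sum_comm' (by
    intro j i
    simp only [Finset.mem_range, Finset.mem_Icc]
    omega)

private theorem one_mul' (f : NCSeries E n) : 1 * f = f := by
  funext w
  rw [mul_apply]
  rw [Finset.sum_eq_single 0]
  · simp [one_apply]
  · intro b hb hb0
    rw [Finset.mem_range] at hb
    have hlen : (w.take b).length = b := by rw [List.length_take]; omega
    have : w.take b ≠ [] := by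
      intro hcon
      rw [hcon] at hlen
      simp at hlen
      omega
    simp [one_apply, this]
  · intro h; simp at h

private theorem mul_one' (f : NCSeries E n) : f * 1 = f := by
  funext w
  rw [mul_apply]
  rw [Finset.sum_eq_single w.length]
  · simp [one_apply]
  · intro b hb hb0
    rw [Finset.mem_range] at hb
    have hlen : (w.drop b).length = w.length - b := by rw [List.length_drop]
    have : w.drop b ≠ [] := by
      intro hcon
      rw [hcon] at hlen
      simp at hlen
      omega
    simp [one_apply, this]
  · intro h; simp at h

instance instRing : Ring (NCSeries E n) where
  __ := (inferInstance : AddCommGroup (NCSeries E n))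
  mul := (· * ·)
  one := 1
  mul_assoc := mul_assoc'
  one_mul := one_mul'
  mul_one := mul_one'
  left_distrib := fun f g h => by
    funext w
    simp only [mul_apply, add_apply, mul_add, Finset.sum_add_distrib]
  right_distrib := fun f g h => by
    funext w
    simp only [mul_apply, add_apply, add_mul, Finset.sum_add_distrib]
  zero_mul := fun f => by
    funext w
    simp only [mul_apply]
    simp [show ∀ u, (0 : NCSeries E n) u = 0 from fun _ => rfl]
  mul_zero := fun f => by
    funext w
    simp only [mul_apply]
    simp [show ∀ u, (0 : NCSeries E n) u = 0 from fun _ => rfl]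

end NCSeries

/-- The generalized binomial coefficient `C(t,m) = t(t-1)⋯(t-m+1)/m!` in a ring containing `ℚ`. -/
noncomputable def genBinom {E : Type*} [CommRing E] [Algebra ℚ E] (t : E) (m : ℕ) : E :=
  algebraMap ℚ E ((m.factorial : ℚ)⁻¹) * ∏ i ∈ Finset.range m, (t - (i : ℕ))

/-- The binomial series `(1+x)^t = ∑ₘ C(t,m) xᵐ`, defined coefficientwise (each coefficient
is a finite sum since `x` has zero constant term). -/
noncomputable def NCSeries.onePow {E : Type*} [CommRing E] [Algebra ℚ E] {n : ℕ}
    (x : NCSeries E n) (t : E) : NCSeries E n :=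
  fun w => ∑ m ∈ Finset.range (w.length + 1), genBinom t m * ((x ^ m) w)


private lemma padic_ball_mem_closure (p : ℕ) [Fact p.Prime] {y : ℚ_[p]} (hy : ‖y‖ ≤ 1) :
    y ∈ closure (Set.range ((Int.cast : ℤ → ℚ_[p]))) := by
  have hz : (⟨y, hy⟩ : ℤ_[p]) ∈ closure (Set.range ((Int.cast : ℤ → ℤ_[p]))) :=
    PadicInt.denseRange_intCast _
  exact map_mem_closure (t := Set.range ((Int.cast : ℤ → ℚ_[p])))
    continuous_subtype_val hz (by rintro _ ⟨m, rfl⟩; exact ⟨m, by push_cast; rfl⟩)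

private lemma genBinom_intCast (p : ℕ) [Fact p.Prime] (k : ℤ) (m : ℕ) :
    genBinom ((k : ℚ_[p])) m = ((Ring.choose k m : ℤ) : ℚ_[p]) := by
  have h1 : (∏ i ∈ Finset.range m, ((k : ℚ_[p]) - (i : ℕ))) =
      (((descPochhammer ℤ m).eval k : ℤ) : ℚ_[p]) := by
    induction m with
    | zero => simp
    | succ m ih =>
      rw [Finset.prod_range_succ, ih, descPochhammer_succ_eval]
      push_cast
      ring
  have h2 : (descPochhammer ℤ m).eval k = m.factorial • Ring.choose k m := by
    rw [Polynomial.eval_eq_smeval, Ring.descPochhammer_eq_factorial_smul_choose]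
  have hm : ((m.factorial : ℚ_[p])) ≠ 0 := Nat.cast_ne_zero.mpr m.factorial_ne_zero
  rw [genBinom, h1, h2]
  rw [show (algebraMap ℚ ℚ_[p]) ((m.factorial : ℚ)⁻¹) = ((m.factorial : ℚ_[p]))⁻¹ by
    rw [map_inv₀, map_natCast]]
  field_simp
  rw [nsmul_eq_mul, Int.cast_mul, Int.cast_natCast]

private lemma norm_pow_apply {p : ℕ} [Fact p.Prime] {n : ℕ} {x : NCSeries ℚ_[p] n}
    (hx : ∀ w, ‖x w‖ ≤ 1) : ∀ (m : ℕ) (w : List (Fin n)), ‖(x ^ m) w‖ ≤ 1 := by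
  intro m
  induction m with
  | zero =>
    intro w
    rw [pow_zero, NCSeries.one_apply]
    split <;> simp
  | succ m ih =>
    intro w
    rw [pow_succ, NCSeries.mul_apply]
    refine IsUltrametricDist.norm_sum_le_of_forall_le_of_nonneg zero_le_one ?_
    intro i _
    rw [norm_mul]
    exact mul_le_one₀ (ih _) (norm_nonneg _) (hx _)

/-- In noncommutative formal power series over `ℚ_p`, let `x` have zero
constant term and all coefficients in `ℤ_p`, and let `(kᵢ)` be a sequence of integers
converging to `t ∈ ℤ_p`. Then `(1+x)^{kᵢ}` converges coefficientwise to `(1+x)^t` (where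
`(1+x)^t` is the binomial series); in particular each coefficient of `(1+x)^t` is a
`p`-adic limit of integers, i.e. lies in `ℤ_p`. -/
theorem binomial_power_tendsto (p : ℕ) [Fact p.Prime] {n : ℕ}
    (x : NCSeries ℚ_[p] n) (hx0 : x [] = 0) (hx : ∀ w, ‖x w‖ ≤ 1)
    (k : ℕ → ℤ) (t : ℚ_[p])
    (hk : Filter.Tendsto (fun i => ((k i : ℤ) : ℚ_[p])) Filter.atTop (nhds t)) :
    (∀ w : List (Fin n),
      Filter.Tendsto (fun i => NCSeries.onePow x ((k i : ℤ) : ℚ_[p]) w)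
        Filter.atTop (nhds (NCSeries.onePow x t w))) ∧
    (∀ w : List (Fin n),
      NCSeries.onePow x t w ∈ closure (Set.range ((Int.cast : ℤ → ℚ_[p])))) := by
  have hcont : ∀ w : List (Fin n), Continuous fun s : ℚ_[p] => NCSeries.onePow x s w := by
    intro w
    unfold NCSeries.onePow genBinom
    exact continuous_finset_sum _ fun m _ =>
      ((continuous_const.mul (continuous_finset_prod _ fun i _ =>
        (continuous_id.sub continuous_const))).mul continuous_const)
  have htend : ∀ w : List (Fin n),
      Filter.Tendsto (fun i => NCSeries.onePow x ((k i : ℤ) : ℚ_[p]) w)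
        Filter.atTop (nhds (NCSeries.onePow x t w)) := fun w =>
    ((hcont w).tendsto t).comp hk
  refine ⟨htend, fun w => ?_⟩
  refine isClosed_closure.mem_of_tendsto (htend w) (Filter.Eventually.of_forall fun i => ?_)
  refine padic_ball_mem_closure p ?_
  unfold NCSeries.onePow
  refine IsUltrametricDist.norm_sum_le_of_forall_le_of_nonneg zero_le_one ?_
  intro m _
  rw [norm_mul, genBinom_intCast]
  exact mul_le_one₀ (Padic.norm_int_le_one _) (norm_nonneg _) (norm_pow_apply hx m w)
end
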